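/- Let g be a Lie algebra over a field k of characteristic 0 possessing a triangular decomposition g = n₊ ⊕ h ⊕ n₋ graded by an abelian group Q with g_0 = h and suppose ⟨·,·⟩ is an invariant symmetric bilinear form on g that is non-degenerate on h, where invariant means ⟨[x,y],z⟩ = ⟨x,[y,z]⟩. Then any graded two-sided ideal i = ⊕_α i_α of g with i ∩ h = 0 and such that every nonzero weight α appearing in i satisfies α(Z)≠0 for some Z∈h (via the adjoint h-action) is contained in the kernel of ⟨·,·⟩. -/

import Mathlib

/-- A graded ideal of a Q-graded Lie algebra which intersects the Cartan part g₀ = h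
trivially, and all of whose nonzero weights are realized nontrivially by the adjoint
h-action, is contained in the kernel of any invariant symmetric bilinear form that is
non-degenerate on h. -/
theorem stmt16 (k : Type*) [Field k] [CharZero k]
    (L : Type*) [LieRing L] [LieAlgebra k L]
    (Q : Type*) [AddCommGroup Q] [DecidableEq Q]
    (g : Q → Submodule k L)
    (hint : DirectSum.IsInternal g)
    (hbr : ∀ α β : Q, ∀ x ∈ g α, ∀ y ∈ g β, ⁅x, y⁆ ∈ g (α + β))
    (habel : ∀ z ∈ g 0, ∀ z' ∈ g 0, ⁅z, z'⁆ = (0 : L))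
    (χ : Q → L → k)
    (hwt : ∀ α : Q, ∀ x ∈ g α, ∀ z ∈ g 0, ⁅z, x⁆ = χ α z • x)
    (B : LinearMap.BilinForm k L)
    (hsymm : ∀ x y : L, B x y = B y x)
    (hinv : ∀ x y z : L, B ⁅x, y⁆ z = B x ⁅y, z⁆)
    (hnd : ∀ z ∈ g 0, (∀ z' ∈ g 0, B z z' = 0) → z = 0)
    (i : LieIdeal k L)
    (higr : (i : Submodule k L) = ⨆ α : Q, (i : Submodule k L) ⊓ g α)
    (hih : (i : Submodule k L) ⊓ g 0 = ⊥)
    (hiwt : ∀ α : Q, α ≠ 0 → (i : Submodule k L) ⊓ g α ≠ ⊥ →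
      ∃ z ∈ g 0, χ α z ≠ 0) :
    ∀ x ∈ i, ∀ y : L, B x y = 0 := by
  -- Step 1: B z w = 0 for z ∈ g 0 and w ∈ i ⊓ g β
  have key1 : ∀ β : Q, ∀ w ∈ (i : Submodule k L) ⊓ g β, ∀ z ∈ g 0, B z w = 0 := by
    intro β w hw z hz
    by_cases hβ : β = 0
    · have : w = 0 := by
        rw [hβ, hih] at hw
        simpa using hw
      simp [this]
    · by_cases hw0 : w = 0
      · simp [hw0]
      · have hne : (i : Submodule k L) ⊓ g β ≠ ⊥ := by
          intro h
          rw [h] at hw; exact hw0 (by simpa using hw)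
        obtain ⟨z₀, hz₀, hχ⟩ := hiwt β hβ hne
        have h1 : B z ⁅z₀, w⁆ = 0 := by
          rw [← hinv z z₀ w, habel z hz z₀ hz₀]
          simp
        rw [hwt β w hw.2 z₀ hz₀] at h1
        simp only [map_smul, smul_eq_mul] at h1
        exact (mul_eq_zero.mp h1).resolve_left hχ
  -- Step 2: B z w = 0 for z ∈ g 0 and w ∈ i
  have key2 : ∀ w ∈ i, ∀ z ∈ g 0, B z w = 0 := by
    intro w hw z hz
    have hw' : w ∈ ⨆ α : Q, (i : Submodule k L) ⊓ g α := higr ▸ hw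
    refine Submodule.iSup_induction _ (motive := fun w => B z w = 0) hw' ?_ (by simp) ?_
    · intro β x hx; exact key1 β x hx z hz
    · intro x y hx hy; simp [hx, hy]
  -- Step 3: B x y = 0 for x ∈ i ⊓ g α, any y
  have key3 : ∀ α : Q, ∀ x ∈ (i : Submodule k L) ⊓ g α, ∀ y : L, B x y = 0 := by
    intro α x hx y
    by_cases hα : α = 0
    · have : x = 0 := by
        rw [hα, hih] at hx
        simpa using hx
      simp [this]
    · by_cases hx0 : x = 0
      · simp [hx0]
      · have hne : (i : Submodule k L) ⊓ g α ≠ ⊥ := by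
          intro h
          rw [h] at hx; exact hx0 (by simpa using hx)
        obtain ⟨z, hz, hχ⟩ := hiwt α hα hne
        have hbr' : ⁅x, y⁆ ∈ i := lie_mem_left k L i x y hx.1
        have h1 : B ⁅z, x⁆ y = 0 := by
          rw [hinv z x y]
          exact key2 _ hbr' z hz
        rw [hwt α x hx.2 z hz] at h1
        simp only [map_smul, LinearMap.smul_apply, smul_eq_mul] at h1
        exact (mul_eq_zero.mp h1).resolve_left hχ
  -- Final step
  intro x hx y
  have hx' : x ∈ ⨆ α : Q, (i : Submodule k L) ⊓ g α := higr ▸ hx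
  refine Submodule.iSup_induction _ (motive := fun x => ∀ y : L, B x y = 0) hx' ?_ (by simp) ?_ y
  · intro α w hw; exact key3 α w hw
  · intro a b ha hb y; simp [ha y, hb y]
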